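/- Let P : H → K be a compact linear operator between Hilbert spaces. Then for each n, the Kolmogorov n-width d_n = inf over n-dimensional subspaces S of K of sup_{‖u‖_H ≤ 1} inf_{v ∈ S} ‖Pu − v‖_K equals the (n+1)-st singular value σ_{n+1} of P, and the optimal subspace is spanned by the first n left singular vectors of P. -/

import Mathlib

open RealInnerProductSpace

section AuxKolmogorov

variable {H K : Type*}
    [NormedAddCommGroup H] [InnerProductSpace ℝ H] [CompleteSpace H]
    [NormedAddCommGroup K] [InnerProductSpace ℝ K] [CompleteSpace K]

lemma aux_inner_P (P : H →L[ℝ] K) (σ : ℕ → ℝ) (φ : ℕ → H)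
    (hon : Orthonormal ℝ φ)
    (heig : ∀ j, (ContinuousLinearMap.adjoint P) (P (φ j)) = (σ j ^ 2) • φ j)
    (i j : ℕ) :
    ⟪P (φ i), P (φ j)⟫ = if i = j then σ j ^ 2 else 0 := by
  have h1 : ⟪P (φ i), P (φ j)⟫ = ⟪φ i, (ContinuousLinearMap.adjoint P) (P (φ j))⟫ := by
    rw [ContinuousLinearMap.adjoint_inner_right]
  rw [h1, heig, real_inner_smul_right, orthonormal_iff_ite.1 hon i j]
  by_cases h : i = j <;> simp [h]

lemma aux_key (P : H →L[ℝ] K) (σ : ℕ → ℝ) (φ : ℕ → H)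
    (hσpos : ∀ j, 0 < σ j) (hσanti : Antitone σ)
    (hon : Orthonormal ℝ φ)
    (heig : ∀ j, (ContinuousLinearMap.adjoint P) (P (φ j)) = (σ j ^ 2) • φ j)
    (hspan : (Submodule.span ℝ (Set.range φ)).topologicalClosure = (LinearMap.ker (P : H →ₗ[ℝ] K))ᗮ)
    (n : ℕ) (u : H) (hu : ∀ j < n, ⟪φ j, u⟫ = 0) :
    ‖P u‖ ≤ σ n * ‖u‖ := by
  classical
  haveI : CompleteSpace (LinearMap.ker (P : H →ₗ[ℝ] K)) :=
    (ContinuousLinearMap.isClosed_ker P).completeSpace_coe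
  obtain ⟨k, hk, w, hw, hdecomp⟩ := (LinearMap.ker (P : H →ₗ[ℝ] K)).exists_add_mem_mem_orthogonal u
  have hφV : ∀ j, φ j ∈ (LinearMap.ker (P : H →ₗ[ℝ] K))ᗮ := fun j =>
    hspan ▸ (Submodule.span ℝ (Set.range φ)).le_topologicalClosure
      (Submodule.subset_span ⟨j, rfl⟩)
  have hkφ : ∀ j, ⟪φ j, k⟫ = 0 := by
    intro j
    rw [real_inner_comm]
    exact (Submodule.mem_orthogonal _ _).1 (hφV j) k hk
  have hcw : ∀ j < n, ⟪φ j, w⟫ = 0 := by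
    intro j hj
    have h := hu j hj
    rw [hdecomp, inner_add_right, hkφ j, zero_add] at h
    exact h
  -- Hilbert basis of (ker P)ᗮ
  let φ' : ℕ → (LinearMap.ker (P : H →ₗ[ℝ] K))ᗮ := fun j => ⟨φ j, hφV j⟩
  have hon' : Orthonormal ℝ φ' := by
    rw [orthonormal_iff_ite] at hon ⊢
    intro i j
    exact hon i j
  have hsp : ⊤ ≤ (Submodule.span ℝ (Set.range φ')).topologicalClosure := by
    intro x _
    have himg : (Submodule.map (LinearMap.ker (P : H →ₗ[ℝ] K))ᗮ.subtype (Submodule.span ℝ (Set.range φ')))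
        = Submodule.span ℝ (Set.range φ) := by
      rw [Submodule.map_span]
      congr 1
      rw [← Set.range_comp]
      rfl
    have hx : (x : H) ∈ closure ((Submodule.span ℝ (Set.range φ)) : Set H) := by
      have h2 : (x : H) ∈ (Submodule.span ℝ (Set.range φ)).topologicalClosure :=
        hspan.symm.le x.2
      rwa [← Submodule.topologicalClosure_coe]
    have h3 : (x : H) ∈ closure (((LinearMap.ker (P : H →ₗ[ℝ] K))ᗮ.subtype) ''
        ((Submodule.span ℝ (Set.range φ')) : Set (LinearMap.ker (P : H →ₗ[ℝ] K))ᗮ)) := by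
      rw [show ((LinearMap.ker (P : H →ₗ[ℝ] K))ᗮ.subtype) ''
            ((Submodule.span ℝ (Set.range φ')) : Set (LinearMap.ker (P : H →ₗ[ℝ] K))ᗮ)
          = ((Submodule.map (LinearMap.ker (P : H →ₗ[ℝ] K))ᗮ.subtype
              (Submodule.span ℝ (Set.range φ'))) : Set H) from rfl, himg]
      exact hx
    have hmem : x ∈ closure ((Submodule.span ℝ (Set.range φ')) : Set (LinearMap.ker (P : H →ₗ[ℝ] K))ᗮ) := by
      rw [closure_subtype]
      exact h3
    rwa [← Submodule.topologicalClosure_coe] at hmem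
  have hbco : ⇑(HilbertBasis.mk hon' hsp) = φ' := HilbertBasis.coe_mk hon' hsp
  have hb : ∀ i, (HilbertBasis.mk hon' hsp) i = φ' i := fun i => congrFun hbco i
  have hsum0 := (HilbertBasis.mk hon' hsp).hasSum_repr ⟨w, hw⟩
  simp only [HilbertBasis.repr_apply_apply] at hsum0
  simp only [hb] at hsum0
  have hfun : (fun i => (⟪φ' i, (⟨w, hw⟩ : (LinearMap.ker (P : H →ₗ[ℝ] K))ᗮ)⟫ : ℝ) • φ' i)
      = fun j => (⟪φ j, w⟫ : ℝ) • φ' j := by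
    funext j
    congr 1
  rw [hfun] at hsum0
  have hsumH : HasSum (fun j => (⟪φ j, w⟫ : ℝ) • φ j) w := by
    have h := hsum0.mapL (LinearMap.ker (P : H →ₗ[ℝ] K))ᗮ.subtypeL
    simpa using h
  set A : H →L[ℝ] H := (ContinuousLinearMap.adjoint P).comp P with hA
  have hsumA : HasSum (fun j => (⟪φ j, w⟫ : ℝ) • ((σ j ^ 2) • φ j)) (A w) := by
    have h := hsumH.mapL A
    simpa [A, ContinuousLinearMap.comp_apply, map_smul, heig] using h
  have hs1 : HasSum (fun j => σ j ^ 2 * ⟪φ j, w⟫ ^ 2) ⟪w, A w⟫ := by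
    have h := hsumA.mapL (innerSL ℝ w)
    have heq : (fun j => (innerSL ℝ w) ((⟪φ j, w⟫ : ℝ) • (σ j ^ 2) • φ j))
        = fun j => σ j ^ 2 * ⟪φ j, w⟫ ^ 2 := by
      funext j
      simp only [innerSL_apply_apply, inner_smul_right]
      rw [real_inner_comm w (φ j)]
      ring
    rwa [heq] at h
  have hs0 : HasSum (fun j => (⟪φ j, w⟫ : ℝ) ^ 2) ⟪w, w⟫ := by
    have h := hsumH.mapL (innerSL ℝ w)
    have heq : (fun j => (innerSL ℝ w) ((⟪φ j, w⟫ : ℝ) • φ j))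
        = fun j => (⟪φ j, w⟫ : ℝ) ^ 2 := by
      funext j
      simp only [innerSL_apply_apply, inner_smul_right]
      rw [real_inner_comm w (φ j)]
      ring
    rwa [heq] at h
  have hcomp : ⟪w, A w⟫ ≤ σ n ^ 2 * ⟪w, w⟫ := by
    refine hasSum_le ?_ hs1 (hs0.mul_left (σ n ^ 2))
    intro j
    by_cases hj : j < n
    · have h0 : (⟪φ j, w⟫ : ℝ) = 0 := hcw j hj
      simp [h0]
    · push_neg at hj
      have hσ : σ j ≤ σ n := hσanti hj
      have h2 : σ j ^ 2 ≤ σ n ^ 2 := pow_le_pow_left₀ (hσpos j).le hσ 2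
      exact mul_le_mul_of_nonneg_right h2 (sq_nonneg _)
  have hPwsq : ‖P w‖ ^ 2 = ⟪w, A w⟫ := by
    rw [← real_inner_self_eq_norm_sq]
    rw [show A w = (ContinuousLinearMap.adjoint P) (P w) from rfl,
      ContinuousLinearMap.adjoint_inner_right]
  have hPw : ‖P w‖ ≤ σ n * ‖w‖ := by
    refine le_of_pow_le_pow_left₀ two_ne_zero (mul_nonneg (hσpos n).le (norm_nonneg _)) ?_
    rw [mul_pow]
    calc ‖P w‖ ^ 2 = ⟪w, A w⟫ := hPwsq
      _ ≤ σ n ^ 2 * ⟪w, w⟫ := hcomp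
      _ = σ n ^ 2 * ‖w‖ ^ 2 := by rw [real_inner_self_eq_norm_sq]
  have hPk : P k = 0 := hk
  have hPu : P u = P w := by rw [hdecomp, map_add, hPk, zero_add]
  have hkw : ⟪k, w⟫ = 0 := (Submodule.mem_orthogonal _ _).1 hw k hk
  have hnw : ‖w‖ ≤ ‖u‖ := by
    refine le_of_pow_le_pow_left₀ two_ne_zero (norm_nonneg _) ?_
    rw [hdecomp, norm_add_sq_real, hkw]
    nlinarith [sq_nonneg ‖k‖]
  calc ‖P u‖ = ‖P w‖ := by rw [hPu]
    _ ≤ σ n * ‖w‖ := hPw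
    _ ≤ σ n * ‖u‖ := mul_le_mul_of_nonneg_left hnw (hσpos n).le

end AuxKolmogorov

/-- The Kolmogorov n-width of a compact operator between Hilbert spaces equals its
(n+1)-st singular value (here `σ j` is 0-indexed, so `σ n` is the (n+1)-st singular
value), and the optimal n-dimensional subspace is the span of the first n left
singular vectors of P. -/
theorem kolmogorov_nwidth_eq_singular_value
    {H K : Type*}
    [NormedAddCommGroup H] [InnerProductSpace ℝ H] [CompleteSpace H]
    [NormedAddCommGroup K] [InnerProductSpace ℝ K] [CompleteSpace K]
    (P : H →L[ℝ] K) (hP : IsCompactOperator P)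
    (σ : ℕ → ℝ) (φ : ℕ → H)
    (hσpos : ∀ j, 0 < σ j) (hσanti : Antitone σ)
    (hon : Orthonormal ℝ φ)
    (heig : ∀ j, (ContinuousLinearMap.adjoint P) (P (φ j)) = (σ j ^ 2) • φ j)
    (hspan : (Submodule.span ℝ (Set.range φ)).topologicalClosure = (LinearMap.ker (P : H →ₗ[ℝ] K))ᗮ)
    (n : ℕ) :
    IsGLB {r : ℝ | ∃ S : Submodule ℝ K, FiniteDimensional ℝ S ∧
        Module.finrank ℝ S = n ∧
        r = ⨆ u : {u : H // ‖u‖ ≤ 1}, ⨅ v : S, ‖P u.1 - (v : K)‖} (σ n) ∧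
    (⨆ u : {u : H // ‖u‖ ≤ 1},
        ⨅ v : (Submodule.span ℝ ((fun j => P (φ j)) '' Set.Iio n)),
          ‖P u.1 - (v : K)‖) = σ n := by
  classical
  have hinner := aux_inner_P P σ φ hon heig
  have haux := aux_key P σ φ hσpos hσanti hon heig hspan
  set Sn : Submodule ℝ K := Submodule.span ℝ ((fun j => P (φ j)) '' Set.Iio n) with hSn
  -- generic bounds
  have hbddb : ∀ (S : Submodule ℝ K) (y : K), BddBelow (Set.range fun v : S => ‖y - v‖) :=
    fun S y => ⟨0, by rintro r ⟨v, rfl⟩; exact norm_nonneg _⟩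
  have hinf_le : ∀ (S : Submodule ℝ K) (y v : K), v ∈ S →
      (⨅ w : S, ‖y - w‖) ≤ ‖y - v‖ := fun S y v hv => ciInf_le (hbddb S y) ⟨v, hv⟩
  have hbdda : ∀ S : Submodule ℝ K,
      BddAbove (Set.range fun u : {u : H // ‖u‖ ≤ 1} => ⨅ v : S, ‖P u.1 - v‖) := by
    intro S
    refine ⟨‖P‖, ?_⟩
    rintro r ⟨u, rfl⟩
    calc (⨅ v : S, ‖P u.1 - v‖) ≤ ‖P u.1 - (0 : K)‖ := hinf_le S _ 0 S.zero_mem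
      _ = ‖P u.1‖ := by rw [sub_zero]
      _ ≤ ‖P‖ := P.unit_le_opNorm u.1 u.2
  have hne : Nonempty {u : H // ‖u‖ ≤ 1} := ⟨⟨0, by simp⟩⟩
  -- upper bound at Sn
  have hub : ∀ u : {u : H // ‖u‖ ≤ 1}, (⨅ v : Sn, ‖P u.1 - v‖) ≤ σ n := by
    intro u
    set q : H := ∑ j ∈ Finset.range n, (⟪φ j, u.1⟫ : ℝ) • φ j with hq
    have hPq : P q ∈ Sn := by
      rw [hq, map_sum]
      refine Submodule.sum_mem _ ?_
      intro j hj
      rw [map_smul]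
      exact Submodule.smul_mem _ _ (Submodule.subset_span ⟨j, Finset.mem_range.1 hj, rfl⟩)
    have hperp : ∀ j < n, (⟪φ j, u.1 - q⟫ : ℝ) = 0 := by
      intro j hj
      rw [inner_sub_right, hq, hon.inner_right_sum (fun j => (⟪φ j, u.1⟫ : ℝ))
        (Finset.mem_range.2 hj), sub_self]
    have hqu : (⟪q, u.1 - q⟫ : ℝ) = 0 := by
      rw [hq, sum_inner]
      refine Finset.sum_eq_zero ?_
      intro j hj
      rw [real_inner_smul_left, hperp j (Finset.mem_range.1 hj), mul_zero]
    have hnorm : ‖u.1 - q‖ ≤ ‖u.1‖ := by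
      refine le_of_pow_le_pow_left₀ two_ne_zero (norm_nonneg _) ?_
      have hsum_eq : q + (u.1 - q) = u.1 := by abel
      have h := norm_add_sq_real q (u.1 - q)
      rw [hsum_eq, hqu] at h
      nlinarith [sq_nonneg ‖q‖]
    calc (⨅ v : Sn, ‖P u.1 - v‖) ≤ ‖P u.1 - P q‖ := hinf_le Sn _ _ hPq
      _ = ‖P (u.1 - q)‖ := by rw [map_sub]
      _ ≤ σ n * ‖u.1 - q‖ := haux n _ hperp
      _ ≤ σ n * 1 := mul_le_mul_of_nonneg_left (hnorm.trans u.2) (hσpos n).le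
      _ = σ n := mul_one _
  -- the norm of P (φ n)
  have hPφn_norm : ∀ j, ‖P (φ j)‖ = σ j := by
    intro j
    have h := hinner j j
    rw [if_pos rfl] at h
    rw [← Real.sqrt_sq (norm_nonneg (P (φ j))), ← real_inner_self_eq_norm_sq, h,
      Real.sqrt_sq (hσpos j).le]
  -- P (φ n) is orthogonal to Sn
  have hperpS : ∀ v ∈ Sn, (⟪P (φ n), v⟫ : ℝ) = 0 := by
    have hle : Sn ≤ (Submodule.span ℝ {P (φ n)})ᗮ := by
      rw [hSn]
      refine Submodule.span_le.2 ?_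
      rintro x ⟨j, hj, rfl⟩
      rw [SetLike.mem_coe, Submodule.mem_orthogonal_singleton_iff_inner_right]
      have hjn : ¬ (n = j) := fun h => (lt_irrefl n) (h ▸ hj)
      rw [hinner n j, if_neg hjn]
    intro v hv
    have := hle hv
    exact Submodule.mem_orthogonal_singleton_iff_inner_right.1 this
  have hlow : σ n ≤ ⨅ v : Sn, ‖P (φ n) - v‖ := by
    refine le_ciInf ?_
    intro v
    have hvp : (⟪P (φ n), (v : K)⟫ : ℝ) = 0 := hperpS v v.2
    refine le_of_pow_le_pow_left₀ two_ne_zero (norm_nonneg _) ?_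
    rw [norm_sub_sq_real, hvp, hPφn_norm n]
    nlinarith [sq_nonneg ‖(v : K)‖]
  have hpart2 : (⨆ u : {u : H // ‖u‖ ≤ 1}, ⨅ v : Sn, ‖P u.1 - v‖) = σ n := by
    refine le_antisymm (ciSup_le hub) ?_
    calc σ n ≤ ⨅ v : Sn, ‖P (φ n) - v‖ := hlow
      _ ≤ ⨆ u : {u : H // ‖u‖ ≤ 1}, ⨅ v : Sn, ‖P u.1 - v‖ :=
        le_ciSup (hbdda Sn) ⟨φ n, (hon.1 n).le⟩
  -- Sn is finite dimensional of rank n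
  haveI hfinSn : FiniteDimensional ℝ Sn := by
    rw [hSn]
    exact FiniteDimensional.span_of_finite ℝ ((Set.finite_Iio n).image _)
  set ψ : ℕ → K := fun j => (σ j)⁻¹ • P (φ j) with hψ
  have honψ : Orthonormal ℝ ψ := by
    rw [orthonormal_iff_ite]
    intro i j
    rw [hψ]
    simp only []
    rw [real_inner_smul_left, real_inner_smul_right, hinner i j]
    by_cases h : i = j
    · subst h
      rw [if_pos rfl, if_pos rfl]
      have hne0 : σ i ≠ 0 := (hσpos i).ne'
      have hre : (σ i)⁻¹ * ((σ i)⁻¹ * σ i ^ 2) = ((σ i)⁻¹ * σ i) * ((σ i)⁻¹ * σ i) := by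
        ring
      rw [hre, inv_mul_cancel₀ hne0, one_mul]
    · rw [if_neg h, if_neg h]
      ring
  have hspan_eq : Sn = Submodule.span ℝ (Set.range (ψ ∘ (fun i : Fin n => (i : ℕ)))) := by
    rw [hSn]
    apply le_antisymm
    · refine Submodule.span_le.2 ?_
      rintro x ⟨j, hj, rfl⟩
      show P (φ j) ∈ Submodule.span ℝ (Set.range (ψ ∘ (fun i : Fin n => (i : ℕ))))
      have hPψ : P (φ j) = σ j • ψ j := by
        rw [hψ]
        simp only []
        rw [smul_smul, mul_inv_cancel₀ (hσpos j).ne', one_smul]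
      rw [hPψ]
      exact Submodule.smul_mem _ _ (Submodule.subset_span ⟨⟨j, hj⟩, rfl⟩)
    · refine Submodule.span_le.2 ?_
      rintro x ⟨i, rfl⟩
      show ψ (i : ℕ) ∈ Submodule.span ℝ ((fun j => P (φ j)) '' Set.Iio n)
      
      rw [hψ]
      simp only []
      exact Submodule.smul_mem _ _ (Submodule.subset_span ⟨(i : ℕ), i.2, rfl⟩)
  have hrank : Module.finrank ℝ Sn = n := by
    rw [hspan_eq]
    rw [finrank_span_eq_card ((honψ.comp (fun i : Fin n => (i : ℕ))
      Fin.val_injective).linearIndependent)]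
    simp
  -- lower bound over all n-dimensional subspaces
  have hlb : ∀ r ∈ {r : ℝ | ∃ S : Submodule ℝ K, FiniteDimensional ℝ S ∧
      Module.finrank ℝ S = n ∧
      r = ⨆ u : {u : H // ‖u‖ ≤ 1}, ⨅ v : S, ‖P u.1 - (v : K)‖}, σ n ≤ r := by
    rintro r ⟨S, hSfin, hSrank, rfl⟩
    haveI := hSfin
    haveI : CompleteSpace S := FiniteDimensional.complete ℝ S
    let T : (Fin (n + 1) → ℝ) →ₗ[ℝ] H :=
      { toFun := fun c => ∑ i, c i • φ i
        map_add' := by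
          intro x y
          simp [add_smul, Finset.sum_add_distrib]
        map_smul' := by
          intro m x
          simp [smul_smul, Finset.smul_sum] }
    let F : (Fin (n + 1) → ℝ) →ₗ[ℝ] S :=
      (Submodule.orthogonalProjectionOnto S).toLinearMap.comp (P.toLinearMap.comp T)
    have hninj : ¬ Function.Injective F := by
      intro hinj
      have h := LinearMap.finrank_le_finrank_of_injective hinj
      rw [hSrank, Module.finrank_fin_fun] at h
      omega
    have hker : LinearMap.ker F ≠ ⊥ := fun h => hninj (LinearMap.ker_eq_bot.1 h)
    obtain ⟨c, hcmem, hc0⟩ := (LinearMap.ker F).ne_bot_iff.1 hker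
    set u : H := ∑ i, c i • φ i with hu
    have hu0 : u ≠ 0 := by
      intro h
      apply hc0
      have hli := (hon.comp (fun i : Fin (n + 1) => (i : ℕ)) Fin.val_injective).linearIndependent
      have hz : ∑ i, c i • (φ ∘ (fun i : Fin (n + 1) => (i : ℕ))) i = 0 := h
      exact funext (Fintype.linearIndependent_iff.1 hli c hz)
    have hPuS : P u ∈ Sᗮ := by
      have hz : Submodule.orthogonalProjectionOnto S (P u) = 0 := hcmem
      exact Submodule.orthogonalProjectionOnto_eq_zero_iff.1 hz
    have hPu_sum : P u = ∑ i, c i • P (φ i) := by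
      rw [hu, map_sum]
      simp only [map_smul]
    have hPuPu : (⟪P u, P u⟫ : ℝ) = ∑ i : Fin (n + 1), σ (i : ℕ) ^ 2 * c i ^ 2 := by
      rw [hPu_sum, sum_inner]
      refine Finset.sum_congr rfl ?_
      intro i _
      rw [real_inner_smul_left, inner_sum]
      have hsum : ∑ j : Fin (n + 1), (⟪P (φ (i : ℕ)), c j • P (φ (j : ℕ))⟫ : ℝ)
          = σ (i : ℕ) ^ 2 * c i := by
        rw [Finset.sum_eq_single i]
        · rw [real_inner_smul_right, hinner, if_pos rfl]
          ring
        · intro j _ hji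
          rw [real_inner_smul_right, hinner,
            if_neg (fun h => hji (Fin.val_injective h).symm), mul_zero]
        · intro h
          exact absurd (Finset.mem_univ i) h
      rw [hsum]
      ring
    have huu : (⟪u, u⟫ : ℝ) = ∑ i : Fin (n + 1), c i ^ 2 := by
      rw [hu, sum_inner]
      refine Finset.sum_congr rfl ?_
      intro i _
      rw [real_inner_smul_left, inner_sum]
      have hsum : ∑ j : Fin (n + 1), (⟪φ (i : ℕ), c j • φ (j : ℕ)⟫ : ℝ) = c i := by
        rw [Finset.sum_eq_single i]
        · rw [real_inner_smul_right, orthonormal_iff_ite.1 hon, if_pos rfl, mul_one]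
        · intro j _ hji
          rw [real_inner_smul_right, orthonormal_iff_ite.1 hon,
            if_neg (fun h => hji (Fin.val_injective h).symm), mul_zero]
        · intro h
          exact absurd (Finset.mem_univ i) h
      rw [hsum]
      ring
    have hcompare : σ n ^ 2 * (⟪u, u⟫ : ℝ) ≤ (⟪P u, P u⟫ : ℝ) := by
      rw [huu, hPuPu, Finset.mul_sum]
      refine Finset.sum_le_sum ?_
      intro i _
      have hi : (i : ℕ) ≤ n := Nat.lt_succ_iff.1 i.2
      have h2 : σ n ^ 2 ≤ σ (i : ℕ) ^ 2 := pow_le_pow_left₀ (hσpos n).le (hσanti hi) 2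
      exact mul_le_mul_of_nonneg_right h2 (sq_nonneg _)
    have hPu_ge : σ n * ‖u‖ ≤ ‖P u‖ := by
      refine le_of_pow_le_pow_left₀ two_ne_zero (norm_nonneg _) ?_
      calc (σ n * ‖u‖) ^ 2 = σ n ^ 2 * (⟪u, u⟫ : ℝ) := by
            rw [mul_pow, real_inner_self_eq_norm_sq]
        _ ≤ (⟪P u, P u⟫ : ℝ) := hcompare
        _ = ‖P u‖ ^ 2 := real_inner_self_eq_norm_sq _
    have hnu : ‖u‖ ≠ 0 := norm_ne_zero_iff.2 hu0
    have hPuh_perp : P (‖u‖⁻¹ • u) ∈ Sᗮ := by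
      rw [map_smul]
      exact Submodule.smul_mem _ _ hPuS
    have hlow2 : σ n ≤ ⨅ v : S, ‖P (‖u‖⁻¹ • u) - v‖ := by
      refine le_ciInf ?_
      intro v
      have hperp : (⟪P (‖u‖⁻¹ • u), (v : K)⟫ : ℝ) = 0 :=
        (Submodule.mem_orthogonal' _ _).1 hPuh_perp v v.2
      have hn2 : σ n ≤ ‖P (‖u‖⁻¹ • u)‖ := by
        rw [map_smul, norm_smul, norm_inv, norm_norm]
        have h4 := mul_le_mul_of_nonneg_left hPu_ge (inv_nonneg.2 (norm_nonneg u))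
        have h3 : ‖u‖⁻¹ * (σ n * ‖u‖) = σ n := by field_simp
        linarith
      refine hn2.trans ?_
      refine le_of_pow_le_pow_left₀ two_ne_zero (norm_nonneg _) ?_
      rw [norm_sub_sq_real, hperp]
      nlinarith [sq_nonneg ‖(v : K)‖]
    have huhnorm : ‖(‖u‖⁻¹ • u)‖ ≤ 1 := by
      rw [norm_smul, norm_inv, norm_norm, inv_mul_cancel₀ hnu]
    calc σ n ≤ ⨅ v : S, ‖P (‖u‖⁻¹ • u) - v‖ := hlow2
      _ ≤ ⨆ u : {u : H // ‖u‖ ≤ 1}, ⨅ v : S, ‖P u.1 - v‖ :=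
        le_ciSup (hbdda S) ⟨‖u‖⁻¹ • u, huhnorm⟩
  refine ⟨IsLeast.isGLB ⟨⟨Sn, hfinSn, hrank, hpart2.symm⟩, hlb⟩, hpart2⟩
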